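/- Let L be an algebraic lattice. Then the set of algebraic (finitary) closure operators on L, ordered pointwise, is a complete lattice: every family (φ_i)_{i∈I} of algebraic closure operators has a greatest lower bound among algebraic closure operators, given by x ↦ ⨆ {⨅_{i∈I} φ_i(k) : k compact, k ≤ x}, and a least upper bound among algebraic closure operators, given by x ↦ ⨆ over all finite sequences (j₁,…,j_k) with entries in I (including the empty sequence, which contributes x) of φ_{j₁}(φ_{j₂}(⋯φ_{j_k}(x)⋯)). -/

import Mathlib

/-- The compact elements of a complete lattice, as `CompleteLattice.IsCompactElement` was
defined in Mathlib of December 2024 (since removed from Mathlib). -/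
def CompleteLattice.IsCompactElement {α : Type*} [CompleteLattice α] (k : α) : Prop :=
  ∀ s : Set α, k ≤ sSup s → ∃ t : Finset α, ↑t ⊆ s ∧ k ≤ t.sup id

/-- A closure operator on a complete lattice: extensive, idempotent and isotone. -/
def IsClosureOp {L : Type*} [CompleteLattice L] (φ : L → L) : Prop :=
  (∀ x, x ≤ φ x) ∧ (∀ x, φ (φ x) = φ x) ∧ (∀ x y : L, x ≤ y → φ x ≤ φ y)

/-- A map on a complete lattice is finitary if its value at `x` is the sup of its
values at the compact elements below `x`. -/
def Finitary {L : Type*} [CompleteLattice L] (φ : L → L) : Prop :=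
  ∀ x : L, φ x = ⨆ k ∈ {k : L | CompleteLattice.IsCompactElement k ∧ k ≤ x}, φ k

/-- The composite `φ_{j₁} ∘ φ_{j₂} ∘ ⋯ ∘ φ_{j_k}` indexed by a finite sequence
`j = (j₁, …, j_k)`; the empty sequence gives the identity. -/
def seqComp {L : Type*} {I : Type*} (φ : I → L → L) (j : List I) : L → L :=
  (j.map φ).foldr (· ∘ ·) id



open CompleteLattice

section Aux
variable {L : Type*} [CompleteLattice L]

private lemma my_bot_compact : CompleteLattice.IsCompactElement (⊥ : L) := by
  intro s _
  exact ⟨∅, by simp⟩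

private lemma my_sup_compact {a b : L} (ha : CompleteLattice.IsCompactElement a)
    (hb : CompleteLattice.IsCompactElement b) :
    CompleteLattice.IsCompactElement (a ⊔ b) := by
  classical
  intro s hs
  obtain ⟨t₁, ht₁, ha'⟩ := ha s (le_sup_left.trans hs)
  obtain ⟨t₂, ht₂, hb'⟩ := hb s (le_sup_right.trans hs)
  refine ⟨t₁ ∪ t₂, ?_, sup_le (ha'.trans ?_) (hb'.trans ?_)⟩
  · intro c hc
    rcases Finset.mem_union.mp hc with h | h
    exacts [ht₁ h, ht₂ h]
  · exact Finset.sup_mono Finset.subset_union_left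
  · exact Finset.sup_mono Finset.subset_union_right

private lemma myS_ne (x : L) :
    {k : L | CompleteLattice.IsCompactElement k ∧ k ≤ x}.Nonempty :=
  ⟨⊥, my_bot_compact, bot_le⟩

private lemma myS_dir (x : L) :
    DirectedOn (· ≤ ·) {k : L | CompleteLattice.IsCompactElement k ∧ k ≤ x} := by
  rintro a ⟨ha, hax⟩ b ⟨hb, hbx⟩
  exact ⟨a ⊔ b, ⟨my_sup_compact ha hb, sup_le hax hbx⟩, le_sup_left, le_sup_right⟩

private lemma my_compact_le_of_le_biSup {s : Set L} (hne : s.Nonempty)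
    (hdir : DirectedOn (· ≤ ·) s) {f : L → L} (hf : Monotone f) {c : L}
    (hc : CompleteLattice.IsCompactElement c)
    (h : c ≤ ⨆ k ∈ s, f k) : ∃ k ∈ s, c ≤ f k := by
  have h' : c ≤ sSup (f '' s) := by rwa [sSup_image]
  have hdir' : DirectedOn (· ≤ ·) (f '' s) := by
    rintro _ ⟨a, ha, rfl⟩ _ ⟨b, hb, rfl⟩
    obtain ⟨d, hd, had, hbd⟩ := hdir a ha b hb
    exact ⟨f d, ⟨d, hd, rfl⟩, hf had, hf hbd⟩
  obtain ⟨y, hy, hcy⟩ :=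
    (CompleteLattice.isCompactElement_iff_le_of_directed_sSup_le L c).mp
      ((CompleteLattice.isCompactElement_iff_exists_le_sSup_of_le_sSup L c).mpr hc)
      (f '' s) (hne.image f) hdir' h'
  obtain ⟨k, hk, rfl⟩ := hy
  exact ⟨k, hk, hcy⟩

private lemma my_compact_le_of_le_iSup {ι : Type*} [Nonempty ι] {g : ι → L}
    (hdir : Directed (· ≤ ·) g) {c : L} (hc : CompleteLattice.IsCompactElement c)
    (h : c ≤ ⨆ j, g j) : ∃ j, c ≤ g j := by
  have h' : c ≤ sSup (Set.range g) := by rwa [sSup_range]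
  obtain ⟨y, hy, hcy⟩ :=
    (CompleteLattice.isCompactElement_iff_le_of_directed_sSup_le L c).mp
      ((CompleteLattice.isCompactElement_iff_exists_le_sSup_of_le_sSup L c).mpr hc)
      (Set.range g) (Set.range_nonempty g) hdir.directedOn_range h'
  · obtain ⟨j, rfl⟩ := hy
    exact ⟨j, hcy⟩

variable [IsCompactlyGenerated L]

private lemma my_eq_biSup (x : L) :
    x = ⨆ k ∈ {k : L | CompleteLattice.IsCompactElement k ∧ k ≤ x}, k := by
  have hset : {k : L | CompleteLattice.IsCompactElement k ∧ k ≤ x} =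
      {c : L | _root_.IsCompactElement c ∧ c ≤ x} := by
    ext k
    exact and_congr_left' (CompleteLattice.isCompactElement_iff_exists_le_sSup_of_le_sSup L k).symm
  rw [← sSup_eq_iSup, hset, sSup_compact_le_eq]

end Aux

section SeqComp
variable {L : Type*} [CompleteLattice L] {I : Type*} (φ : I → L → L)

private lemma seqComp_cons (i : I) (j : List I) (x : L) :
    seqComp φ (i :: j) x = φ i (seqComp φ j x) := rfl

private lemma seqComp_mono (hco : ∀ i, IsClosureOp (φ i)) (j : List I) :
    Monotone (seqComp φ j) := by
  induction j with
  | nil => exact monotone_id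
  | cons i j ih => exact fun a b h => (hco i).2.2 _ _ (ih h)

private lemma seqComp_ext (hco : ∀ i, IsClosureOp (φ i)) (j : List I) (x : L) :
    x ≤ seqComp φ j x := by
  induction j with
  | nil => exact le_rfl
  | cons i j ih => exact ih.trans ((hco i).1 _)

private lemma seqComp_append (j j' : List I) (x : L) :
    seqComp φ (j ++ j') x = seqComp φ j (seqComp φ j' x) := by
  induction j with
  | nil => rfl
  | cons i j ih => simpa [seqComp_cons] using congrArg (φ i) ih

private lemma seqComp_dir (hco : ∀ i, IsClosureOp (φ i)) (x : L) :
    Directed (· ≤ ·) (fun j : List I => seqComp φ j x) := by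
  intro j j'
  have h1 : seqComp φ j x ≤ seqComp φ (j ++ j') x := by
    rw [seqComp_append]
    exact seqComp_mono φ hco j (seqComp_ext φ hco j' x)
  have h2 : seqComp φ j' x ≤ seqComp φ (j ++ j') x := by
    rw [seqComp_append]
    exact seqComp_ext φ hco j _
  exact ⟨j ++ j', h1, h2⟩

end SeqComp

/-- The algebraic closure operators on an algebraic lattice, ordered pointwise,
form a complete lattice: every family has a greatest lower bound among algebraic
closure operators, given by `x ↦ ⨆ {⨅ i, φ_i k : k compact, k ≤ x}`, and a least
upper bound among algebraic closure operators, given by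
`x ↦ ⨆_{finite sequences j in I} φ_{j₁}(φ_{j₂}(⋯ φ_{j_k}(x)⋯))`. -/
theorem aco_complete_lattice {L : Type*} [CompleteLattice L] [IsCompactlyGenerated L]
    {I : Type*} (φ : I → L → L)
    (hco : ∀ i, IsClosureOp (φ i)) (hfin : ∀ i, Finitary (φ i)) :
    (IsClosureOp (fun x : L =>
        ⨆ k ∈ {k : L | CompleteLattice.IsCompactElement k ∧ k ≤ x}, ⨅ i, φ i k) ∧
      Finitary (fun x : L =>
        ⨆ k ∈ {k : L | CompleteLattice.IsCompactElement k ∧ k ≤ x}, ⨅ i, φ i k) ∧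
      (∀ (i : I) (x : L),
        (⨆ k ∈ {k : L | CompleteLattice.IsCompactElement k ∧ k ≤ x}, ⨅ i, φ i k) ≤
          φ i x) ∧
      (∀ ρ : L → L, IsClosureOp ρ → Finitary ρ → (∀ (i : I) (x : L), ρ x ≤ φ i x) →
        ∀ x : L, ρ x ≤
          ⨆ k ∈ {k : L | CompleteLattice.IsCompactElement k ∧ k ≤ x}, ⨅ i, φ i k)) ∧
    (IsClosureOp (fun x : L => ⨆ j : List I, seqComp φ j x) ∧
      Finitary (fun x : L => ⨆ j : List I, seqComp φ j x) ∧
      (∀ (i : I) (x : L), φ i x ≤ ⨆ j : List I, seqComp φ j x) ∧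
      (∀ ρ : L → L, IsClosureOp ρ → Finitary ρ → (∀ (i : I) (x : L), φ i x ≤ ρ x) →
        ∀ x : L, (⨆ j : List I, seqComp φ j x) ≤ ρ x)) := by
  classical
  have hext : ∀ i (x : L), x ≤ φ i x := fun i => (hco i).1
  have hidem : ∀ i (x : L), φ i (φ i x) = φ i x := fun i => (hco i).2.1
  have hmono : ∀ i, Monotone (φ i) := fun i a b h => (hco i).2.2 a b h
  -- the candidate infimum
  set σ : L → L := fun x : L =>
    ⨆ k ∈ {k : L | CompleteLattice.IsCompactElement k ∧ k ≤ x}, ⨅ i, φ i k with hσ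
  have hinf_mono : Monotone (fun k : L => ⨅ i, φ i k) := fun a b h =>
    le_iInf fun i => (iInf_le _ i).trans (hmono i h)
  have hσmono : Monotone σ := by
    intro a b h
    exact iSup₂_le fun k hk => le_iSup₂_of_le k ⟨hk.1, hk.2.trans h⟩ le_rfl
  have hσext : ∀ x : L, x ≤ σ x := by
    intro x
    calc x = ⨆ k ∈ {k : L | CompleteLattice.IsCompactElement k ∧ k ≤ x}, k :=
            my_eq_biSup x
      _ ≤ σ x := iSup₂_mono fun k _ => le_iInf fun i => hext i k
  have hσle : ∀ (i : I) (x : L), σ x ≤ φ i x := fun i x =>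
    iSup₂_le fun k hk => (iInf_le _ i).trans (hmono i hk.2)
  have hσidem : ∀ x : L, σ (σ x) = σ x := by
    intro x
    refine le_antisymm ?_ (hσext (σ x))
    refine iSup₂_le fun c hc => ?_
    obtain ⟨k, hk, hck⟩ := my_compact_le_of_le_biSup (myS_ne x) (myS_dir x)
      hinf_mono hc.1 hc.2
    have : (⨅ i, φ i c) ≤ ⨅ i, φ i k := iInf_mono fun i => by
      calc φ i c ≤ φ i (φ i k) := hmono i (hck.trans (iInf_le _ i))
        _ = φ i k := hidem i k
    exact this.trans (le_iSup₂_of_le k hk le_rfl)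
  have hσfin : Finitary σ := by
    intro x
    refine le_antisymm ?_ (iSup₂_le fun c hc => hσmono hc.2)
    refine iSup₂_le fun k hk => le_iSup₂_of_le k hk ?_
    exact le_iSup₂_of_le k ⟨hk.1, le_rfl⟩ le_rfl
  -- the candidate supremum
  set τ : L → L := fun x : L => ⨆ j : List I, seqComp φ j x with hτ
  have hτext : ∀ x : L, x ≤ τ x := fun x => le_iSup (fun j : List I => seqComp φ j x) []
  have hτmono : Monotone τ := fun a b h =>
    iSup_le fun j => le_iSup_of_le j (seqComp_mono φ hco j h)
  have hφτ : ∀ (i : I) (x : L), φ i x ≤ τ x := fun i x =>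
    le_iSup (fun j : List I => seqComp φ j x) [i]
  have hφτ' : ∀ (i : I) (x : L), φ i (τ x) ≤ τ x := by
    intro i x
    rw [hfin i (τ x)]
    refine iSup₂_le fun c hc => ?_
    obtain ⟨j, hj⟩ := my_compact_le_of_le_iSup (seqComp_dir φ hco x) hc.1 hc.2
    calc φ i c ≤ φ i (seqComp φ j x) := hmono i hj
      _ = seqComp φ (i :: j) x := (seqComp_cons φ i j x).symm
      _ ≤ τ x := le_iSup (fun j : List I => seqComp φ j x) (i :: j)
  have hτidem : ∀ x : L, τ (τ x) = τ x := by
    intro x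
    refine le_antisymm (iSup_le fun j => ?_) (hτext (τ x))
    induction j with
    | nil => exact le_rfl
    | cons i j ih => exact ((hmono i ih).trans (hφτ' i x))
  have hτfin : Finitary τ := by
    intro x
    refine le_antisymm (iSup_le fun j => ?_) (iSup₂_le fun c hc => hτmono hc.2)
    have key : ∀ (j : List I) (y : L), seqComp φ j y ≤
        ⨆ c ∈ {k : L | CompleteLattice.IsCompactElement k ∧ k ≤ y}, seqComp φ j c := by
      intro j
      induction j with
      | nil => exact fun y => (my_eq_biSup y).le
      | cons i j ih =>
        intro y
        rw [seqComp_cons]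
        calc φ i (seqComp φ j y)
            ≤ φ i (⨆ c ∈ {k : L | CompleteLattice.IsCompactElement k ∧ k ≤ y},
                seqComp φ j c) := hmono i (ih y)
          _ ≤ _ := by
              rw [hfin i _]
              refine iSup₂_le fun d hd => ?_
              obtain ⟨c, hc, hdc⟩ := my_compact_le_of_le_biSup (myS_ne y) (myS_dir y)
                (seqComp_mono φ hco j) hd.1 hd.2
              refine le_iSup₂_of_le c hc ?_
              rw [seqComp_cons]
              exact hmono i hdc
    exact (key j x).trans (iSup₂_mono fun c _ =>
      le_iSup (fun j : List I => seqComp φ j c) j)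
  refine ⟨⟨⟨hσext, hσidem, fun a b h => hσmono h⟩, hσfin, hσle, ?_⟩,
    ⟨⟨hτext, hτidem, fun a b h => hτmono h⟩, hτfin, hφτ, ?_⟩⟩
  · intro ρ hρ hρfin hρle x
    rw [hρfin x]
    refine iSup₂_le fun k hk => le_iSup₂_of_le k hk (le_iInf fun i => hρle i k)
  · intro ρ hρ hρfin hρle x
    refine iSup_le fun j => ?_
    induction j with
    | nil => exact hρ.1 x
    | cons i j ih =>
      calc seqComp φ (i :: j) x = φ i (seqComp φ j x) := seqComp_cons φ i j x
        _ ≤ ρ (seqComp φ j x) := hρle i _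
        _ ≤ ρ (ρ x) := hρ.2.2 _ _ ih
        _ = ρ x := hρ.2.1 x
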